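/- arXiv:2303.02541 — 2 statements merged into one kernel-verified Lean document; each statement's English description precedes it below -/
import Mathlib

section
/- Assume 𝕍 is continuous. If A ∈ 𝓕 and (P_n) is a sequence in Θ with P_n(A) → 1, then there exists a probability measure P ∈ Θ with P(A) = 1. -/
open MeasureTheory Filter
open scoped ENNReal

/-- If `V` is continuous, `A` is measurable and `Pₙ ∈ Θ` with
`Pₙ(A) → 1`, then some `P ∈ Θ` has `P(A) = 1`. -/
theorem stmt_10 {Ω : Type*} [MeasurableSpace Ω]
    (Θ : Set (Measure Ω)) (hΘne : Θ.Nonempty)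
    (hprob : ∀ P ∈ Θ, IsProbabilityMeasure P)
    (V : Set Ω → ℝ≥0∞)
    (hV : ∀ A : Set Ω, V A = ⨆ P ∈ Θ, P A)
    (hmax : ∀ P : Measure Ω, IsProbabilityMeasure P →
      (∀ A, MeasurableSet A → P A ≤ V A) → P ∈ Θ)
    (hcont : ∀ A : ℕ → Set Ω, (∀ n, MeasurableSet (A n)) → Antitone A →
      (⋂ n, A n) = ∅ → Tendsto (fun n => V (A n)) atTop (nhds 0))
    (A : Set Ω) (hA : MeasurableSet A)
    (Pseq : ℕ → Measure Ω) (hPseq : ∀ n, Pseq n ∈ Θ)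
    (hconv : Tendsto (fun n => Pseq n A) atTop (nhds 1)) :
    ∃ P ∈ Θ, P A = 1 := by
  classical
  let U : Ultrafilter ℕ := Ultrafilter.of atTop
  have hUle : (U : Filter ℕ) ≤ atTop := Ultrafilter.of_le _
  let m : Set Ω → ℝ≥0∞ := fun B => limUnder (U : Filter ℕ) fun n => Pseq n B
  have hten : ∀ B : Set Ω, Tendsto (fun n => Pseq n B) (U : Filter ℕ) (nhds (m B)) := by
    intro B
    apply tendsto_nhds_limUnder
    obtain ⟨a, -, ha⟩ := isCompact_univ.ultrafilter_le_nhds (U.map fun n => Pseq n B)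
      (by simp)
    exact ⟨a, by rwa [Ultrafilter.coe_map] at ha⟩
  have huniq : ∀ (B : Set Ω) (a : ℝ≥0∞),
      Tendsto (fun n => Pseq n B) (U : Filter ℕ) (nhds a) → m B = a :=
    fun B a h => tendsto_nhds_unique (hten B) h
  have hmV : ∀ B, m B ≤ V B := by
    intro B
    refine le_of_tendsto (hten B) (Eventually.of_forall fun n => ?_)
    rw [hV B]
    exact le_iSup₂ (f := fun P (_ : P ∈ Θ) => P B) (Pseq n) (hPseq n)
  have hmempty : m ∅ = 0 := by
    refine huniq ∅ 0 ?_
    simp only [measure_empty]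
    exact tendsto_const_nhds
  -- countable additivity
  have hadd : ∀ f : ℕ → Set Ω, (∀ i, MeasurableSet (f i)) → Pairwise (Function.onFun Disjoint f) →
      m (⋃ i, f i) = ∑' i, m (f i) := by
    intro f hf hdisj
    set B : ℕ → Set Ω := fun k => ⋃ i, ⋃ (_ : k ≤ i), f i with hBdef
    have hBmeas : ∀ k, MeasurableSet (B k) := fun k =>
      MeasurableSet.iUnion fun i => MeasurableSet.iUnion fun _ => hf i
    have hBanti : Antitone B := by
      intro a b hab x hx
      simp only [hBdef, Set.mem_iUnion] at hx ⊢
      obtain ⟨i, hbi, hxi⟩ := hx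
      exact ⟨i, le_trans hab hbi, hxi⟩
    have hBempty : ⋂ k, B k = ∅ := by
      ext x
      simp only [Set.mem_iInter, Set.mem_empty_iff_false, iff_false]
      intro hx
      obtain ⟨i, -, hxi⟩ := Set.mem_iUnion₂.mp (hx 0)
      obtain ⟨j, hji, hxj⟩ := Set.mem_iUnion₂.mp (hx (i + 1))
      exact (hdisj (Nat.ne_of_lt (Nat.lt_of_succ_le hji)).symm).le_bot ⟨hxj, hxi⟩
    have hVB : Tendsto (fun k => V (B k)) atTop (nhds 0) := hcont B hBmeas hBanti hBempty
    have hmB : Tendsto (fun k => m (B k)) atTop (nhds 0) :=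
      tendsto_of_tendsto_of_tendsto_of_le_of_le tendsto_const_nhds hVB
        (fun k => zero_le) (fun k => hmV (B k))
    have hdecomp : ∀ k, m (⋃ i, f i) =
        (∑ i ∈ Finset.range k, m (f i)) + m (B k) := by
      intro k
      have hsplit : (⋃ i, f i) = (⋃ i ∈ Finset.range k, f i) ∪ B k := by
        ext x
        simp only [Set.mem_iUnion, Set.mem_union, Finset.mem_range, hBdef]
        constructor
        · rintro ⟨i, hxi⟩
          rcases lt_or_ge i k with h | h
          · exact Or.inl ⟨i, h, hxi⟩
          · exact Or.inr ⟨i, h, hxi⟩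
        · rintro (⟨i, -, hxi⟩ | ⟨i, -, hxi⟩) <;> exact ⟨i, hxi⟩
      have hdisj2 : Disjoint (⋃ i ∈ Finset.range k, f i) (B k) := by
        rw [Set.disjoint_left]
        rintro x hx hxB
        obtain ⟨i, hik, hxi⟩ := Set.mem_iUnion₂.mp hx
        obtain ⟨j, hjk, hxj⟩ := Set.mem_iUnion₂.mp hxB
        rw [Finset.mem_range] at hik
        exact (hdisj (Nat.ne_of_lt (lt_of_lt_of_le hik hjk))).le_bot ⟨hxi, hxj⟩
      have h1 : ∀ n, Pseq n (⋃ i, f i) =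
          (∑ i ∈ Finset.range k, Pseq n (f i)) + Pseq n (B k) := by
        intro n
        rw [hsplit, measure_union hdisj2 (hBmeas k),
          measure_biUnion_finset (fun i _ j _ hij => hdisj hij) (fun i _ => hf i)]
      refine huniq _ _ ?_
      have : Tendsto (fun n => (∑ i ∈ Finset.range k, Pseq n (f i)) + Pseq n (B k))
          (U : Filter ℕ) (nhds ((∑ i ∈ Finset.range k, m (f i)) + m (B k))) :=
        Tendsto.add (tendsto_finset_sum _ fun i _ => hten (f i)) (hten (B k))
      exact this.congr fun n => (h1 n).symm
    have hS : Tendsto (fun k => ∑ i ∈ Finset.range k, m (f i)) atTop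
        (nhds (∑' i, m (f i))) := ENNReal.tendsto_nat_tsum _
    have hconst : Tendsto (fun k => (∑ i ∈ Finset.range k, m (f i)) + m (B k)) atTop
        (nhds (m (⋃ i, f i))) :=
      (tendsto_const_nhds : Tendsto (fun _ : ℕ => m (⋃ i, f i)) atTop _).congr
        fun k => hdecomp k
    have := tendsto_nhds_unique hconst (hS.add hmB)
    simpa using this
  let P : Measure Ω := Measure.ofMeasurable (fun s _ => m s) hmempty
    (fun f hf hd => hadd f hf hd)
  have hPapp : ∀ s, MeasurableSet s → P s = m s := fun s hs =>
    Measure.ofMeasurable_apply s hs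
  have hPprob : IsProbabilityMeasure P := by
    constructor
    rw [hPapp _ MeasurableSet.univ]
    refine huniq _ 1 ?_
    have : ∀ n, Pseq n Set.univ = 1 := fun n => (hprob _ (hPseq n)).measure_univ
    exact tendsto_const_nhds.congr fun n => (this n).symm
  have hPmem : P ∈ Θ := hmax P hPprob fun B hB => (hPapp B hB) ▸ hmV B
  refine ⟨P, hPmem, ?_⟩
  rw [hPapp A hA]
  exact huniq A 1 (hconv.mono_left hUle)
end

section
/- Assume 𝕍 is continuous, T-invariant, and T-ergodic. Then for every P ∈ Θ₀ there exists a finite partition {B_1, …, B_n} of Ω with B_k ∈ 𝓘, P(B_k) > 0 for each k, and such that no B_k admits a nontrivial invariant decomposition: for every A ∈ 𝓘 with A ⊆ B_k, either P(A) = 0 or P(A) = P(B_k). -/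
open MeasureTheory Filter
open scoped ENNReal

lemma stmt11_no_inf {Ω : Type*} [MeasurableSpace Ω] (T : Ω → Ω)
    (Θ : Set (Measure Ω)) (V : Set Ω → ℝ≥0∞)
    (hV : ∀ A : Set Ω, V A = ⨆ P ∈ Θ, P A)
    (hcont : ∀ A : ℕ → Set Ω, (∀ n, MeasurableSet (A n)) → Antitone A →
      (⋂ n, A n) = ∅ → Tendsto (fun n => V (A n)) atTop (nhds 0))
    (hVerg : ∀ A : Set Ω, MeasurableSet A → T ⁻¹' A = A → V A = 0 ∨ V A = 1)
    (P : Measure Ω) (hP : P ∈ Θ)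
    (D : ℕ → Set Ω) (hmeas : ∀ i, MeasurableSet (D i))
    (hinv : ∀ i, T ⁻¹' (D i) = D i) (hpos : ∀ i, 0 < P (D i))
    (hdisj : Pairwise (Function.onFun Disjoint D)) : False := by
  have hPA : ∀ A : Set Ω, P A ≤ V A := by
    intro A; rw [hV]; exact le_biSup (fun Q => Q A) hP
  have hVmono : ∀ A B : Set Ω, A ⊆ B → V A ≤ V B := by
    intro A B h; rw [hV, hV]
    exact iSup₂_le fun Q hQ => (measure_mono h).trans (le_biSup (fun Q => Q B) hQ)
  have hV1 : ∀ i, V (D i) = 1 := by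
    intro i
    rcases hVerg _ (hmeas i) (hinv i) with h | h
    · exact absurd ((hpos i).trans_le (hPA _)) (by simp [h])
    · exact h
  set C : ℕ → Set Ω := fun n => ⋃ k : ℕ, D (n + k) with hC
  have hCmeas : ∀ n, MeasurableSet (C n) := fun n => MeasurableSet.iUnion fun k => hmeas _
  have hCanti : Antitone C := by
    intro m n hmn ω hω
    simp only [hC, Set.mem_iUnion] at hω ⊢
    obtain ⟨k, hk⟩ := hω
    exact ⟨n + k - m, by rwa [show m + (n + k - m) = n + k by omega]⟩
  have hCempty : (⋂ n, C n) = ∅ := by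
    ext ω
    simp only [hC, Set.mem_iInter, Set.mem_iUnion, Set.mem_empty_iff_false, iff_false]
    intro h
    obtain ⟨k, hk⟩ := h 0
    obtain ⟨j, hj⟩ := h (k + 1)
    have hne : (0 : ℕ) + k ≠ k + 1 + j := by omega
    exact Set.disjoint_left.mp (hdisj hne) hk hj
  have htend := hcont C hCmeas hCanti hCempty
  have hge : ∀ n, (1 : ℝ≥0∞) ≤ V (C n) := by
    intro n
    rw [← hV1 n]
    exact hVmono _ _ (by simpa using Set.subset_iUnion (fun k => D (n + k)) 0)
  have := htend.eventually (eventually_lt_nhds (by norm_num : (0:ℝ≥0∞) < 1) )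
  obtain ⟨n, hn⟩ := this.exists
  exact absurd (hge n) (not_le.mpr hn)

lemma stmt11_gap {Ω : Type*} [MeasurableSpace Ω] (T : Ω → Ω)
    (P : Measure Ω) [IsProbabilityMeasure P]
    (hno : ∀ D : ℕ → Set Ω, (∀ i, MeasurableSet (D i)) →
      (∀ i, T ⁻¹' (D i) = D i) → (∀ i, 0 < P (D i)) →
      Pairwise (Function.onFun Disjoint D) → False) :
    ∃ δ : ℝ≥0∞, 0 < δ ∧ ∀ A : Set Ω, MeasurableSet A → T ⁻¹' A = A →
      P A = 0 ∨ δ ≤ P A := by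
  by_contra hcon
  push_neg at hcon
  have H : ∀ δ : ℝ≥0∞, 0 < δ → ∃ A : Set Ω, MeasurableSet A ∧ T ⁻¹' A = A ∧
      P A ≠ 0 ∧ P A < δ := by
    intro δ hδ
    obtain ⟨A, hA1, hA2, hA3, hA4⟩ := hcon δ hδ
    exact ⟨A, hA1, hA2, hA3, hA4⟩
  set S := {A : Set Ω // MeasurableSet A ∧ T ⁻¹' A = A ∧ P A ≠ 0} with hS
  have hdivpos : ∀ A : S, 0 < P A.1 / 4 := fun A =>
    ENNReal.div_pos A.2.2.2 (by norm_num)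
  obtain ⟨g, hg⟩ : ∃ g : S → S, ∀ A : S, P (g A).1 < P A.1 / 4 := by
    refine ⟨fun A => ⟨(H _ (hdivpos A)).choose, (H _ (hdivpos A)).choose_spec.1,
      (H _ (hdivpos A)).choose_spec.2.1, (H _ (hdivpos A)).choose_spec.2.2.1⟩,
      fun A => (H _ (hdivpos A)).choose_spec.2.2.2⟩
  obtain ⟨A0, hA01, hA02, hA03, -⟩ := H 1 one_pos
  set seq : ℕ → S := fun n => g^[n] ⟨A0, hA01, hA02, hA03⟩ with hseq
  set a : ℕ → ℝ≥0∞ := fun n => P (seq n).1 with ha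
  have hfin : ∀ n, a n ≠ ⊤ := fun n => measure_ne_top P _
  have hstep : ∀ n, a (n + 1) < a n / 4 := by
    intro n
    have : seq (n + 1) = g (seq n) := Function.iterate_succ_apply' g n _
    rw [ha]; simp only; rw [this]; exact hg (seq n)
  have hstep' : ∀ n, a (n + 1) ≤ a n * 4⁻¹ := by
    intro n
    have := (hstep n).le
    rwa [ENNReal.div_eq_inv_mul, mul_comm] at this
  have hpow : ∀ n k, a (n + k) ≤ a n * 4⁻¹ ^ k := by
    intro n k
    induction k with
    | zero => simp
    | succ k ih =>
      calc a (n + (k + 1)) = a ((n + k) + 1) := by ring_nf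
        _ ≤ a (n + k) * 4⁻¹ := hstep' _
        _ ≤ a n * 4⁻¹ ^ k * 4⁻¹ := by exact mul_le_mul_left ih _
        _ = a n * 4⁻¹ ^ (k + 1) := by ring
  -- the tail unions
  set U : ℕ → Set Ω := fun i => ⋃ k : ℕ, (seq (i + 1 + k)).1 with hU
  have hUmeas : ∀ i, MeasurableSet (U i) :=
    fun i => MeasurableSet.iUnion fun k => (seq (i + 1 + k)).2.1
  have hUlt : ∀ i, P (U i) < a i := by
    intro i
    have h1 : P (U i) ≤ ∑' k : ℕ, a (i + 1 + k) := measure_iUnion_le _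
    have h2 : (∑' k : ℕ, a (i + 1 + k)) ≤ ∑' k : ℕ, a (i + 1) * 4⁻¹ ^ k :=
      ENNReal.tsum_le_tsum fun k => hpow (i + 1) k
    have h3 : (∑' k : ℕ, a (i + 1) * 4⁻¹ ^ k) = a (i + 1) * (1 - 4⁻¹)⁻¹ := by
      rw [ENNReal.tsum_mul_left, ENNReal.tsum_geometric]
    have h45 : (4:ℝ≥0∞)⁻¹ ≤ 2⁻¹ := ENNReal.inv_le_inv.mpr (by norm_num)
    have h4 : ((1 : ℝ≥0∞) - 4⁻¹)⁻¹ ≤ 2 := by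
      have hle : (2:ℝ≥0∞)⁻¹ ≤ 1 - 4⁻¹ := by
        refine ENNReal.le_sub_of_add_le_left (by norm_num) ?_
        calc (4:ℝ≥0∞)⁻¹ + 2⁻¹ ≤ 2⁻¹ + 2⁻¹ := add_le_add_left h45 _
          _ = 1 := ENNReal.inv_two_add_inv_two
      calc ((1:ℝ≥0∞) - 4⁻¹)⁻¹ ≤ ((2:ℝ≥0∞)⁻¹)⁻¹ := ENNReal.inv_le_inv.mpr hle
        _ = 2 := inv_inv 2
    have h5 : (4:ℝ≥0∞)⁻¹ * 2 ≤ 1 := by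
      calc (4:ℝ≥0∞)⁻¹ * 2 ≤ 2⁻¹ * 2 := mul_le_mul_left h45 _
        _ = 1 := ENNReal.inv_mul_cancel (by norm_num) (by norm_num)
    calc P (U i) ≤ a (i + 1) * ((1:ℝ≥0∞) - 4⁻¹)⁻¹ := h1.trans (h2.trans_eq h3)
      _ ≤ a (i + 1) * 2 := mul_le_mul_right h4 _
      _ < (a i / 4) * 2 := by
          rw [ENNReal.mul_lt_mul_iff_left (by norm_num) (by norm_num)]
          exact hstep i
      _ = a i * (4⁻¹ * 2) := by rw [ENNReal.div_eq_inv_mul]; ring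
      _ ≤ a i * 1 := mul_le_mul_right h5 _
      _ = a i := mul_one _
  set D : ℕ → Set Ω := fun i => (seq i).1 \ U i with hD
  have hDmeas : ∀ i, MeasurableSet (D i) := fun i => (seq i).2.1.diff (hUmeas i)
  have hDinv : ∀ i, T ⁻¹' (D i) = D i := by
    intro i
    rw [hD]
    simp only [Set.preimage_diff, hU, Set.preimage_iUnion]
    rw [(seq i).2.2.1]
    congr 1
    exact Set.iUnion_congr fun k => (seq (i + 1 + k)).2.2.1
  have hDpos : ∀ i, 0 < P (D i) := by
    intro i
    rw [pos_iff_ne_zero]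
    intro h0
    have hsub : (seq i).1 ⊆ D i ∪ U i := fun x hx => by
      by_cases hxU : x ∈ U i
      · exact Or.inr hxU
      · exact Or.inl ⟨hx, hxU⟩
    have : a i ≤ P (D i) + P (U i) := (measure_mono hsub).trans (measure_union_le _ _)
    rw [h0, zero_add] at this
    exact absurd this (not_le.mpr (hUlt i))
  have hDdisj : Pairwise (Function.onFun Disjoint D) := by
    have key : ∀ i j, i < j → Disjoint (D i) (D j) := by
      intro i j hij
      have hsub : D j ⊆ U i := by
        have : (seq j).1 ⊆ U i := by
          have : j = i + 1 + (j - i - 1) := by omega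
          rw [this, hU]
          exact Set.subset_iUnion (fun k => ((seq (i + 1 + k)).1 : Set Ω)) _
        exact fun x hx => this hx.1
      exact Set.disjoint_left.mpr fun x hx hxj => hx.2 (hsub hxj)
    intro i j hij
    rcases lt_or_gt_of_ne hij with h | h
    · exact key i j h
    · exact (key j i h).symm
  exact hno D hDmeas hDinv hDpos hDdisj

lemma stmt11_split {Ω : Type*} [MeasurableSpace Ω] (T : Ω → Ω)
    (P : Measure Ω) [IsProbabilityMeasure P]
    (δ : ℝ≥0∞) (hδtop : δ ≠ ⊤)
    (hgap : ∀ A : Set Ω, MeasurableSet A → T ⁻¹' A = A → P A = 0 ∨ δ ≤ P A) :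
    ∀ n : ℕ, ∀ B : Set Ω, MeasurableSet B → T ⁻¹' B = B → 0 < P B →
      P B ≤ n * δ →
    ∃ s : Finset (Set Ω),
      (∀ b ∈ s, MeasurableSet b ∧ T ⁻¹' b = b ∧ 0 < P b ∧
        ∀ A : Set Ω, MeasurableSet A → T ⁻¹' A = A → A ⊆ b → P A = 0 ∨ P A = P b) ∧
      (s : Set (Set Ω)).PairwiseDisjoint id ∧ ⋃₀ ↑s = B := by
  classical
  intro n
  induction n with
  | zero =>
    intro B _ _ hpos hle
    simp only [Nat.cast_zero, zero_mul, nonpos_iff_eq_zero] at hle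
    exact absurd hle hpos.ne'
  | succ n ih =>
    intro B hBmeas hBinv hBpos hBle
    by_cases hatom : ∀ A : Set Ω, MeasurableSet A → T ⁻¹' A = A → A ⊆ B →
        P A = 0 ∨ P A = P B
    · refine ⟨{B}, ?_, ?_, ?_⟩
      · intro b hb
        rw [Finset.mem_singleton] at hb
        subst hb
        exact ⟨hBmeas, hBinv, hBpos, hatom⟩
      · simp
      · simp
    · push_neg at hatom
      obtain ⟨A, hAmeas, hAinv, hAsub, hA0, hAB⟩ := hatom
      set A' := B \ A with hA'
      have hA'meas : MeasurableSet A' := hBmeas.diff hAmeas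
      have hA'inv : T ⁻¹' A' = A' := by
        rw [hA', Set.preimage_diff, hBinv, hAinv]
      have hsum : P A + P A' = P B := by
        rw [← measure_union (Set.disjoint_sdiff_right) hA'meas,
          Set.union_diff_cancel hAsub]
      have hA'0 : P A' ≠ 0 := by
        intro h
        rw [h, add_zero] at hsum
        exact hAB hsum
      have hApos : 0 < P A := pos_iff_ne_zero.mpr hA0
      have hA'pos : 0 < P A' := pos_iff_ne_zero.mpr hA'0
      have hAδ : δ ≤ P A := (hgap A hAmeas hAinv).resolve_left hA0
      have hA'δ : δ ≤ P A' := (hgap A' hA'meas hA'inv).resolve_left hA'0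
      have hAle : P A ≤ n * δ := by
        have h1 : P A + δ ≤ (n : ℝ≥0∞) * δ + δ := by
          calc P A + δ ≤ P A + P A' := add_le_add_right hA'δ _
            _ = P B := hsum
            _ ≤ (n + 1 : ℕ) * δ := hBle
            _ = (n : ℝ≥0∞) * δ + δ := by push_cast; ring
        exact (ENNReal.add_le_add_iff_right hδtop).mp h1
      have hA'le : P A' ≤ n * δ := by
        have h1 : P A' + δ ≤ (n : ℝ≥0∞) * δ + δ := by
          calc P A' + δ ≤ P A' + P A := add_le_add_right hAδ _
            _ = P B := by rw [add_comm]; exact hsum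
            _ ≤ (n + 1 : ℕ) * δ := hBle
            _ = (n : ℝ≥0∞) * δ + δ := by push_cast; ring
        exact (ENNReal.add_le_add_iff_right hδtop).mp h1
      obtain ⟨s, hs1, hs2, hs3⟩ := ih A hAmeas hAinv hApos hAle
      obtain ⟨t, ht1, ht2, ht3⟩ := ih A' hA'meas hA'inv hA'pos hA'le
      refine ⟨s ∪ t, ?_, ?_, ?_⟩
      · intro b hb
        rcases Finset.mem_union.mp hb with h | h
        · exact hs1 b h
        · exact ht1 b h
      · intro b hb c hc hbc
        simp only [Finset.coe_union, Set.mem_union, Finset.mem_coe] at hb hc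
        have hsubA : ∀ x ∈ s, x ⊆ A := fun x hx => hs3 ▸ Set.subset_sUnion_of_mem hx
        have hsubA' : ∀ x ∈ t, x ⊆ A' := fun x hx => ht3 ▸ Set.subset_sUnion_of_mem hx
        have hAA' : Disjoint A A' := Set.disjoint_sdiff_right
        rcases hb with hb | hb <;> rcases hc with hc | hc
        · exact hs2 hb hc hbc
        · exact (hAA'.mono (hsubA b hb) (hsubA' c hc))
        · exact (hAA'.symm.mono (hsubA' b hb) (hsubA c hc))
        · exact ht2 hb hc hbc
      · rw [Finset.coe_union, Set.sUnion_union, hs3, ht3]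
        exact Set.union_diff_cancel hAsub

/-- If `V` is continuous, `T`-invariant and `T`-ergodic, then
every `T`-invariant `P ∈ Θ₀` admits a finite partition of `Ω` into invariant
sets of positive `P`-measure none of which has a nontrivial invariant
decomposition. -/
theorem stmt_11 {Ω : Type*} [MeasurableSpace Ω] (T : Ω → Ω) (hT : Measurable T)
    (Θ : Set (Measure Ω)) (hΘne : Θ.Nonempty)
    (hprob : ∀ P ∈ Θ, IsProbabilityMeasure P)
    (V : Set Ω → ℝ≥0∞)
    (hV : ∀ A : Set Ω, V A = ⨆ P ∈ Θ, P A)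
    (hmax : ∀ P : Measure Ω, IsProbabilityMeasure P →
      (∀ A, MeasurableSet A → P A ≤ V A) → P ∈ Θ)
    (hcont : ∀ A : ℕ → Set Ω, (∀ n, MeasurableSet (A n)) → Antitone A →
      (⋂ n, A n) = ∅ → Tendsto (fun n => V (A n)) atTop (nhds 0))
    (hVinv : ∀ A : Set Ω, MeasurableSet A → V (T ⁻¹' A) = V A)
    (hVerg : ∀ A : Set Ω, MeasurableSet A → T ⁻¹' A = A → V A = 0 ∨ V A = 1)
    (P : Measure Ω) (hP : P ∈ Θ)
    (hPinv : ∀ A : Set Ω, MeasurableSet A → P (T ⁻¹' A) = P A) :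
    ∃ (n : ℕ) (B : Fin n → Set Ω),
      (∀ k, MeasurableSet (B k) ∧ T ⁻¹' (B k) = B k ∧ 0 < P (B k)) ∧
      Pairwise (Function.onFun Disjoint B) ∧
      (⋃ k, B k) = Set.univ ∧
      (∀ k, ∀ A : Set Ω, MeasurableSet A → T ⁻¹' A = A → A ⊆ B k →
        P A = 0 ∨ P A = P (B k)) := by
  classical
  have hPprob : IsProbabilityMeasure P := hprob P hP
  have hno : ∀ D : ℕ → Set Ω, (∀ i, MeasurableSet (D i)) →
      (∀ i, T ⁻¹' (D i) = D i) → (∀ i, 0 < P (D i)) →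
      Pairwise (Function.onFun Disjoint D) → False :=
    fun D h1 h2 h3 h4 => stmt11_no_inf T Θ V hV hcont hVerg P hP D h1 h2 h3 h4
  obtain ⟨δ, hδ, hgap⟩ := stmt11_gap T P hno
  set δ' := min δ 1 with hδ'def
  have hδ'pos : 0 < δ' := lt_min hδ one_pos
  have hδ'top : δ' ≠ ⊤ :=
    ((min_le_right δ 1).trans_lt ENNReal.one_lt_top).ne
  have hgap' : ∀ A : Set Ω, MeasurableSet A → T ⁻¹' A = A →
      P A = 0 ∨ δ' ≤ P A :=
    fun A h1 h2 => (hgap A h1 h2).imp id fun h => (min_le_left δ 1).trans h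
  obtain ⟨n, hn⟩ : ∃ n : ℕ, δ'⁻¹ < (n : ℝ≥0∞) :=
    ENNReal.exists_nat_gt (ENNReal.inv_ne_top.mpr hδ'pos.ne')
  have hB : P Set.univ ≤ n * δ' := by
    rw [measure_univ]
    calc (1 : ℝ≥0∞) = δ'⁻¹ * δ' := (ENNReal.inv_mul_cancel hδ'pos.ne' hδ'top).symm
      _ ≤ n * δ' := mul_le_mul_left hn.le _
  obtain ⟨s, hs1, hs2, hs3⟩ := stmt11_split T P δ' hδ'top hgap' n Set.univ
    MeasurableSet.univ (by simp) (by simp) hB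
  refine ⟨s.card, fun k => ((s.equivFin.symm k : s) : Set Ω), ?_, ?_, ?_, ?_⟩
  · intro k
    obtain ⟨h1, h2, h3, -⟩ := hs1 _ (s.equivFin.symm k).2
    exact ⟨h1, h2, h3⟩
  · intro k l hkl
    have hne : ((s.equivFin.symm k : s) : Set Ω) ≠ ((s.equivFin.symm l : s) : Set Ω) := by
      intro h
      exact hkl (s.equivFin.symm.injective (Subtype.ext h))
    exact hs2 (s.equivFin.symm k).2 (s.equivFin.symm l).2 hne
  · rw [← hs3]
    ext x
    simp only [Set.mem_iUnion, Set.mem_sUnion, Finset.mem_coe]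
    constructor
    · rintro ⟨k, hk⟩
      exact ⟨_, (s.equivFin.symm k).2, hk⟩
    · rintro ⟨b, hb, hx⟩
      refine ⟨s.equivFin ⟨b, hb⟩, ?_⟩
      rw [Equiv.symm_apply_apply]
      exact hx
  · intro k A h1 h2 h3
    exact (hs1 _ (s.equivFin.symm k).2).2.2.2 A h1 h2 h3
end
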